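/- Let u: U → ℝ be C⁴ and biharmonic (Δ²u = 0) on an open set U ⊆ ℝ² symmetric about the x-axis, such that u(x,0)=0 and ∂u/∂y(x,0)=0 on U ∩ {y=0}. Then the function v(x₀,y₀) := -u(x₀,-y₀) - 2y₀ ∂u/∂y(x₀,-y₀) - y₀² Δu(x₀,-y₀), defined for (x₀,y₀) with (x₀,-y₀) ∈ U, is biharmonic and agrees with u together with its first normal derivative on the x-axis. -/

import Mathlib

open MeasureTheory Set

/-- Partial derivative in the first (x) coordinate. -/
noncomputable def pdx (u : ℝ × ℝ → ℝ) : ℝ × ℝ → ℝ :=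
  fun p => deriv (fun t => u (t, p.2)) p.1

/-- Partial derivative in the second (y) coordinate. -/
noncomputable def pdy (u : ℝ × ℝ → ℝ) : ℝ × ℝ → ℝ :=
  fun p => deriv (fun t => u (p.1, t)) p.2

/-- The Laplacian ∂²/∂x² + ∂²/∂y². -/
noncomputable def lap (u : ℝ × ℝ → ℝ) : ℝ × ℝ → ℝ :=
  fun p => pdx (pdx u) p + pdy (pdy u) p

/-- Poritsky's reflection for the clamped plate:
`v(x₀,y₀) = -u(x₀,-y₀) - 2 y₀ u_y(x₀,-y₀) - y₀² Δu(x₀,-y₀)`. -/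
noncomputable def poritskyV (u : ℝ × ℝ → ℝ) : ℝ × ℝ → ℝ :=
  fun p => -u (p.1, -p.2) - 2 * p.2 * pdy u (p.1, -p.2) - p.2 ^ 2 * lap u (p.1, -p.2)

namespace PoritskyAux

open scoped ContDiff

variable {E : Type*} [NormedAddCommGroup E] [NormedSpace ℝ E]
variable {U : Set (ℝ × ℝ)} {p : ℝ × ℝ}

lemma hasDerivAt_sliceX {f : ℝ × ℝ → E} (hf : DifferentiableAt ℝ f p) :
    HasDerivAt (fun t => f (t, p.2)) (fderiv ℝ f p (1, 0)) p.1 := by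
  have h1 : HasDerivAt (fun t : ℝ => ((t, p.2) : ℝ × ℝ)) ((1 : ℝ), (0 : ℝ)) p.1 :=
    HasDerivAt.prodMk (hasDerivAt_id p.1) (hasDerivAt_const p.1 p.2)
  exact hf.hasFDerivAt.comp_hasDerivAt p.1 h1

lemma hasDerivAt_sliceY {f : ℝ × ℝ → E} (hf : DifferentiableAt ℝ f p) :
    HasDerivAt (fun t => f (p.1, t)) (fderiv ℝ f p (0, 1)) p.2 := by
  have h1 : HasDerivAt (fun t : ℝ => ((p.1, t) : ℝ × ℝ)) ((0 : ℝ), (1 : ℝ)) p.2 :=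
    HasDerivAt.prodMk (hasDerivAt_const p.2 p.1) (hasDerivAt_id p.2)
  exact hf.hasFDerivAt.comp_hasDerivAt p.2 h1

lemma pdx_eq_fderiv {f : ℝ × ℝ → ℝ} (hf : DifferentiableAt ℝ f p) :
    pdx f p = fderiv ℝ f p (1, 0) := (hasDerivAt_sliceX hf).deriv

lemma pdy_eq_fderiv {f : ℝ × ℝ → ℝ} (hf : DifferentiableAt ℝ f p) :
    pdy f p = fderiv ℝ f p (0, 1) := (hasDerivAt_sliceY hf).deriv

lemma hasDerivAt_pdx {f : ℝ × ℝ → ℝ} (hf : DifferentiableAt ℝ f p) :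
    HasDerivAt (fun t => f (t, p.2)) (pdx f p) p.1 := by
  rw [pdx_eq_fderiv hf]; exact hasDerivAt_sliceX hf

lemma hasDerivAt_pdy {f : ℝ × ℝ → ℝ} (hf : DifferentiableAt ℝ f p) :
    HasDerivAt (fun t => f (p.1, t)) (pdy f p) p.2 := by
  rw [pdy_eq_fderiv hf]; exact hasDerivAt_sliceY hf

lemma tendsto_sliceX (p : ℝ × ℝ) :
    Filter.Tendsto (fun t : ℝ => ((t, p.2) : ℝ × ℝ)) (nhds p.1) (nhds p) := by
  have h : Continuous (fun t : ℝ => ((t, p.2) : ℝ × ℝ)) := continuous_id.prodMk continuous_const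
  simpa using h.tendsto p.1

lemma tendsto_sliceY (p : ℝ × ℝ) :
    Filter.Tendsto (fun t : ℝ => ((p.1, t) : ℝ × ℝ)) (nhds p.2) (nhds p) := by
  have h : Continuous (fun t : ℝ => ((p.1, t) : ℝ × ℝ)) := continuous_const.prodMk continuous_id
  simpa using h.tendsto p.2

lemma pdx_congr_nhds {f f₂ : ℝ × ℝ → ℝ} (h : f =ᶠ[nhds p] f₂) : pdx f p = pdx f₂ p :=
  Filter.EventuallyEq.deriv_eq (h.comp_tendsto (tendsto_sliceX p))

lemma pdy_congr_nhds {f f₂ : ℝ × ℝ → ℝ} (h : f =ᶠ[nhds p] f₂) : pdy f p = pdy f₂ p :=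
  Filter.EventuallyEq.deriv_eq (h.comp_tendsto (tendsto_sliceY p))

lemma pdx_congr_on {f f₂ : ℝ × ℝ → ℝ} (hU : IsOpen U) (h : ∀ q ∈ U, f q = f₂ q) (hp : p ∈ U) :
    pdx f p = pdx f₂ p :=
  pdx_congr_nhds (Filter.eventuallyEq_of_mem (hU.mem_nhds hp) h)

lemma pdy_congr_on {f f₂ : ℝ × ℝ → ℝ} (hU : IsOpen U) (h : ∀ q ∈ U, f q = f₂ q) (hp : p ∈ U) :
    pdy f p = pdy f₂ p :=
  pdy_congr_nhds (Filter.eventuallyEq_of_mem (hU.mem_nhds hp) h)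

lemma diffAt {n : WithTop ℕ∞} {f : ℝ × ℝ → ℝ} (hU : IsOpen U) (hf : ContDiffOn ℝ n f U)
    (hn : 1 ≤ n) (hp : p ∈ U) : DifferentiableAt ℝ f p :=
  (hf.contDiffAt (hU.mem_nhds hp)).differentiableAt (zero_lt_one.trans_le hn).ne'

lemma contDiffOn_pdx {n : WithTop ℕ∞} {f : ℝ × ℝ → ℝ} (hU : IsOpen U)
    (hf : ContDiffOn ℝ (n + 1) f U) : ContDiffOn ℝ n (pdx f) U := by
  have h2 : ContDiffOn ℝ n (fun q => fderiv ℝ f q ((1 : ℝ), (0 : ℝ))) U :=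
    (hf.fderiv_of_isOpen hU le_rfl).clm_apply contDiffOn_const
  have h1 : (1 : WithTop ℕ∞) ≤ n + 1 := by exact le_add_of_nonneg_left zero_le
  exact h2.congr fun q hq => pdx_eq_fderiv (diffAt hU hf h1 hq)

lemma contDiffOn_pdy {n : WithTop ℕ∞} {f : ℝ × ℝ → ℝ} (hU : IsOpen U)
    (hf : ContDiffOn ℝ (n + 1) f U) : ContDiffOn ℝ n (pdy f) U := by
  have h2 : ContDiffOn ℝ n (fun q => fderiv ℝ f q ((0 : ℝ), (1 : ℝ))) U :=
    (hf.fderiv_of_isOpen hU le_rfl).clm_apply contDiffOn_const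
  have h1 : (1 : WithTop ℕ∞) ≤ n + 1 := by exact le_add_of_nonneg_left zero_le
  exact h2.congr fun q hq => pdy_eq_fderiv (diffAt hU hf h1 hq)

lemma pdx_pdy_symm {f : ℝ × ℝ → ℝ} (hU : IsOpen U) (hf : ContDiffOn ℝ 2 f U) (hp : p ∈ U) :
    pdx (pdy f) p = pdy (pdx f) p := by
  have hf1 : ContDiffOn ℝ 1 (fderiv ℝ f) U := hf.fderiv_of_isOpen hU (by norm_num)
  have hdf' : DifferentiableAt ℝ (fderiv ℝ f) p := by
    exact ((hf1.contDiffAt (hU.mem_nhds hp)).differentiableAt one_ne_zero)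
  have heq : ∀ᶠ q in nhds p, HasFDerivAt f (fderiv ℝ f q) q := by
    filter_upwards [hU.mem_nhds hp] with q hq
    exact (diffAt hU hf (by norm_num) hq).hasFDerivAt
  have hsymm := second_derivative_symmetric_of_eventually heq hdf'.hasFDerivAt
  have e1 : pdx (pdy f) p = (fderiv ℝ (fderiv ℝ f) p ((1 : ℝ), (0 : ℝ))) (0, 1) := by
    rw [pdx_congr_on hU (fun q hq => pdy_eq_fderiv (diffAt hU hf (by norm_num) hq)) hp]
    have H := (hasDerivAt_sliceX hdf').clm_apply (hasDerivAt_const p.1 ((0 : ℝ), (1 : ℝ)))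
    simpa [pdx] using H.deriv
  have e2 : pdy (pdx f) p = (fderiv ℝ (fderiv ℝ f) p ((0 : ℝ), (1 : ℝ))) (1, 0) := by
    rw [pdy_congr_on hU (fun q hq => pdx_eq_fderiv (diffAt hU hf (by norm_num) hq)) hp]
    have H := (hasDerivAt_sliceY hdf').clm_apply (hasDerivAt_const p.2 ((1 : ℝ), (0 : ℝ)))
    simpa [pdy] using H.deriv
  rw [e1, e2, hsymm]

end PoritskyAux

namespace PoritskyAux
open scoped ContDiff
variable {U : Set (ℝ × ℝ)} {p : ℝ × ℝ}

lemma harmonic_smooth {g : ℝ × ℝ → ℝ} (hU : IsOpen U)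
    (hg : ContDiffOn ℝ 2 g U) (hh : ∀ q ∈ U, lap g q = 0) :
    ContDiffOn ℝ ∞ g U := by
  classical
  set gx : ℝ × ℝ → ℝ := fun q => fderiv ℝ g q ((1 : ℝ), (0 : ℝ)) with hgx_def
  set gy : ℝ × ℝ → ℝ := fun q => fderiv ℝ g q ((0 : ℝ), (1 : ℝ)) with hgy_def
  have hgx1 : ContDiffOn ℝ 1 gx U :=
    (hg.fderiv_of_isOpen hU (by norm_num)).clm_apply contDiffOn_const
  have hgy1 : ContDiffOn ℝ 1 gy U :=
    (hg.fderiv_of_isOpen hU (by norm_num)).clm_apply contDiffOn_const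
  have hgd : ∀ q ∈ U, DifferentiableAt ℝ g q := fun q hq => diffAt hU hg (by norm_num) hq
  have hgxd : ∀ q ∈ U, DifferentiableAt ℝ gx q := fun q hq => diffAt hU hgx1 le_rfl hq
  have hgyd : ∀ q ∈ U, DifferentiableAt ℝ gy q := fun q hq => diffAt hU hgy1 le_rfl hq
  have hgxeq : ∀ q ∈ U, pdx g q = gx q := fun q hq => pdx_eq_fderiv (hgd q hq)
  have hgyeq : ∀ q ∈ U, pdy g q = gy q := fun q hq => pdy_eq_fderiv (hgd q hq)
  have hharm : ∀ q ∈ U, fderiv ℝ gx q (1, 0) + fderiv ℝ gy q (0, 1) = 0 := by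
    intro q hq
    have h1 : pdx (pdx g) q = fderiv ℝ gx q (1, 0) := by
      rw [pdx_congr_on hU hgxeq hq]; exact pdx_eq_fderiv (hgxd q hq)
    have h2 : pdy (pdy g) q = fderiv ℝ gy q (0, 1) := by
      rw [pdy_congr_on hU hgyeq hq]; exact pdy_eq_fderiv (hgyd q hq)
    rw [← h1, ← h2]; exact hh q hq
  have hsch : ∀ q ∈ U, fderiv ℝ gx q (0, 1) = fderiv ℝ gy q (1, 0) := by
    intro q hq
    have h1 : pdy gx q = fderiv ℝ gx q (0, 1) := pdy_eq_fderiv (hgxd q hq)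
    have h2 : pdx gy q = fderiv ℝ gy q (1, 0) := pdx_eq_fderiv (hgyd q hq)
    rw [← h1, ← h2]
    calc pdy gx q = pdy (pdx g) q :=
          (pdy_congr_on hU (fun r hr => (hgxeq r hr)) hq).symm
      _ = pdx (pdy g) q := (pdx_pdy_symm hU hg hq).symm
      _ = pdx gy q := pdx_congr_on hU hgyeq hq
  set e := Complex.equivRealProdCLM with he_def
  set V : Set ℂ := ⇑e ⁻¹' U with hV_def
  have hV : IsOpen V := hU.preimage e.continuous
  set f : ℂ → ℂ := fun z => e.symm (gx (e z), -gy (e z)) with hf_def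
  have hdiff : DifferentiableOn ℂ f V := by
    intro z hz
    have hq : e z ∈ U := hz
    set B : (ℝ × ℝ) →L[ℝ] (ℝ × ℝ) :=
      (fderiv ℝ gx (e z)).prod (-(fderiv ℝ gy (e z))) with hB_def
    have hG : HasFDerivAt (fun p : ℝ × ℝ => ((gx p, -gy p) : ℝ × ℝ)) B (e z) :=
      (HasFDerivAt.prodMk (hgxd _ hq).hasFDerivAt (hgyd _ hq).hasFDerivAt.neg)
    have h1 : HasFDerivAt (fun z : ℂ => ((gx (e z), -gy (e z)) : ℝ × ℝ))
        (B.comp (e : ℂ →L[ℝ] ℝ × ℝ)) z := hG.comp z ((e : ℂ →L[ℝ] ℝ × ℝ).hasFDerivAt)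
    have hF : HasFDerivAt f
        ((e.symm : ℝ × ℝ →L[ℝ] ℂ).comp (B.comp (e : ℂ →L[ℝ] ℝ × ℝ))) z :=
      ((e.symm : ℝ × ℝ →L[ℝ] ℂ).hasFDerivAt).comp z h1
    set c : ℂ := (fderiv ℝ gx (e z) (1, 0) : ℝ) - (fderiv ℝ gy (e z) (1, 0) : ℝ) * Complex.I
      with hc_def
    have hres : (c • (ContinuousLinearMap.id ℂ ℂ)).restrictScalars ℝ =
        (e.symm : ℝ × ℝ →L[ℝ] ℂ).comp (B.comp (e : ℂ →L[ℝ] ℝ × ℝ)) := by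
      apply ContinuousLinearMap.ext; intro w
      have hew : ((e w : ℝ × ℝ)) = (w.re, w.im) := rfl
      have hw : ((e w : ℝ × ℝ)) = w.re • ((1 : ℝ), (0 : ℝ)) + w.im • ((0 : ℝ), (1 : ℝ)) := by
        rw [hew]; simp [Prod.ext_iff]
      have hLHS : (ContinuousLinearMap.restrictScalars ℝ (c • ContinuousLinearMap.id ℂ ℂ)) w
          = c * w := rfl
      have hRHS : ((e.symm : ℝ × ℝ →L[ℝ] ℂ).comp (B.comp (e : ℂ →L[ℝ] ℝ × ℝ))) w
          = e.symm ((fderiv ℝ gx (e z)) (e w), -((fderiv ℝ gy (e z)) (e w))) := rfl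
      rw [hLHS, hRHS, hw, _root_.map_add, _root_.map_smul, _root_.map_smul,
        _root_.map_add, _root_.map_smul, _root_.map_smul]
      have hA2 : fderiv ℝ gx (e z) (0, 1) = fderiv ℝ gy (e z) (1, 0) := hsch _ hq
      have hB2 : fderiv ℝ gy (e z) (0, 1) = -fderiv ℝ gx (e z) (1, 0) := by
        have := hharm _ hq; linarith
      rw [Complex.equivRealProdCLM_symm_apply]
      simp only [smul_eq_mul, hA2, hB2, hc_def]
      apply Complex.ext <;> simp <;> ring
    exact (hasFDerivAt_of_restrictScalars ℝ (f' := c • ContinuousLinearMap.id ℂ ℂ) hF hres).differentiableAt.differentiableWithinAt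
  have hfC : ContDiffOn ℝ ∞ f V := (hdiff.contDiffOn hV).restrict_scalars ℝ
  have hmapsTo : MapsTo (⇑(e.symm)) U V := by
    intro p hp
    show e (e.symm p) ∈ U
    rw [e.apply_symm_apply]; exact hp
  have hcomp : ContDiffOn ℝ ∞ (fun p : ℝ × ℝ => f (e.symm p)) U :=
    hfC.comp ((e.symm : ℝ × ℝ →L[ℝ] ℂ).contDiff.contDiffOn) hmapsTo
  have hgxI : ContDiffOn ℝ ∞ gx U := by
    have h1 : ContDiffOn ℝ ∞ (fun p : ℝ × ℝ => (f (e.symm p)).re) U :=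
      Complex.reCLM.contDiff.comp_contDiffOn hcomp
    refine h1.congr fun p hp => ?_
    simp [hf_def, he_def, Complex.equivRealProdCLM_symm_apply]
  have hgyI : ContDiffOn ℝ ∞ gy U := by
    have h1 : ContDiffOn ℝ ∞ (fun p : ℝ × ℝ => -(f (e.symm p)).im) U :=
      (Complex.imCLM.contDiff.comp_contDiffOn hcomp).neg
    refine h1.congr fun p hp => ?_
    simp [hf_def, he_def, Complex.equivRealProdCLM_symm_apply]
  rw [contDiffOn_infty_iff_fderiv_of_isOpen hU]
  constructor
  · exact fun p hp => (hgd p hp).differentiableWithinAt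
  · have hsm : ContDiffOn ℝ ∞ (fun p : ℝ × ℝ =>
        gx p • (ContinuousLinearMap.fst ℝ ℝ ℝ) + gy p • (ContinuousLinearMap.snd ℝ ℝ ℝ)) U :=
      (hgxI.smul contDiffOn_const).add (hgyI.smul contDiffOn_const)
    refine hsm.congr ?_
    intro p hp
    apply ContinuousLinearMap.ext; intro w
    have hw : (w : ℝ × ℝ) = w.1 • ((1 : ℝ), (0 : ℝ)) + w.2 • ((0 : ℝ), (1 : ℝ)) := by
      simp [Prod.ext_iff]
    conv_lhs => rw [hw]
    rw [_root_.map_add, _root_.map_smul, _root_.map_smul]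
    simp [smul_eq_mul, mul_comm]
    rfl

end PoritskyAux

namespace PoritskyAux
open scoped ContDiff
variable {U : Set (ℝ × ℝ)} {p : ℝ × ℝ}

lemma contDiffOn_pdx' {n m : WithTop ℕ∞} {f : ℝ × ℝ → ℝ} (hU : IsOpen U)
    (hf : ContDiffOn ℝ m f U) (h : n + 1 ≤ m) : ContDiffOn ℝ n (pdx f) U :=
  contDiffOn_pdx hU (hf.of_le h)

lemma contDiffOn_pdy' {n m : WithTop ℕ∞} {f : ℝ × ℝ → ℝ} (hU : IsOpen U)
    (hf : ContDiffOn ℝ m f U) (h : n + 1 ≤ m) : ContDiffOn ℝ n (pdy f) U :=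
  contDiffOn_pdy hU (hf.of_le h)

/-- `Δ(∂_y f) = ∂_y(Δ f)` for `C³` functions, stated pointwise. -/
lemma lap_pdy_comm {f : ℝ × ℝ → ℝ} (hU : IsOpen U) (hf : ContDiffOn ℝ 3 f U) (hp : p ∈ U) :
    pdx (pdx (pdy f)) p + pdy (pdy (pdy f)) p
      = pdy (fun q => pdx (pdx f) q + pdy (pdy f) q) p := by
  have hf2 : ContDiffOn ℝ 2 f U := hf.of_le (by norm_num)
  have hpx2 : ContDiffOn ℝ 2 (pdx f) U := contDiffOn_pdx' hU hf (by norm_num)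
  have hpxx : ContDiffOn ℝ 1 (pdx (pdx f)) U := contDiffOn_pdx' hU hpx2 (by norm_num)
  have hpy2 : ContDiffOn ℝ 2 (pdy f) U := contDiffOn_pdy' hU hf (by norm_num)
  have hpyy : ContDiffOn ℝ 1 (pdy (pdy f)) U := contDiffOn_pdy' hU hpy2 (by norm_num)
  have e1 : pdx (pdx (pdy f)) p = pdy (pdx (pdx f)) p := by
    have c1 : ∀ q ∈ U, pdx (pdy f) q = pdy (pdx f) q := fun q hq => pdx_pdy_symm hU hf2 hq
    rw [pdx_congr_on hU c1 hp]
    exact pdx_pdy_symm hU hpx2 hp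
  have Hx := hasDerivAt_pdy (diffAt hU hpxx le_rfl hp)
  have Hy := hasDerivAt_pdy (diffAt hU hpyy le_rfl hp)
  rw [e1]
  exact ((Hx.add Hy).deriv).symm

lemma biharmonic_main {w : ℝ × ℝ → ℝ} (hU : IsOpen U)
    (hw4 : ContDiffOn ℝ 4 w U) (hb : ∀ q ∈ U, lap (lap w) q = 0) :
    ∀ p ∈ U, lap (lap (fun q => -w q + 2 * q.2 * pdy w q - q.2 ^ 2 * lap w q)) p = 0 := by
  intro p hp
  set v : ℝ × ℝ → ℝ := fun q => -w q + 2 * q.2 * pdy w q - q.2 ^ 2 * lap w q with hv_def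
  set h : ℝ × ℝ → ℝ := pdy w with hh_def
  set g : ℝ × ℝ → ℝ := lap w with hg_def
  -- smoothness bookkeeping
  have hw3 : ContDiffOn ℝ 3 w U := hw4.of_le (by norm_num)
  have hh3 : ContDiffOn ℝ 3 h U := contDiffOn_pdy' hU hw4 (by norm_num)
  have hpxw3 : ContDiffOn ℝ 3 (pdx w) U := contDiffOn_pdx' hU hw4 (by norm_num)
  have hpxh2 : ContDiffOn ℝ 2 (pdx h) U := contDiffOn_pdx' hU hh3 (by norm_num)
  have hpyh2 : ContDiffOn ℝ 2 (pdy h) U := contDiffOn_pdy' hU hh3 (by norm_num)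
  have hpyyh1 : ContDiffOn ℝ 1 (pdy (pdy h)) U := contDiffOn_pdy' hU hpyh2 (by norm_num)
  have hpxyh1 : ContDiffOn ℝ 1 (pdx (pdy h)) U := contDiffOn_pdx' hU hpyh2 (by norm_num)
  have hg2 : ContDiffOn ℝ 2 g U := by
    have h1 : ContDiffOn ℝ 2 (pdx (pdx w)) U :=
      contDiffOn_pdx' hU hpxw3 (by norm_num)
    have h2 : ContDiffOn ℝ 2 (pdy (pdy w)) U :=
      contDiffOn_pdy' hU (contDiffOn_pdy' hU hw4 (by norm_num) :
        ContDiffOn ℝ 3 (pdy w) U) (by norm_num)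
    exact h1.add h2
  have hgI : ContDiffOn ℝ ∞ g U := harmonic_smooth hU hg2 hb
  have hg3 : ContDiffOn ℝ 3 g U := hgI.of_le (WithTop.coe_le_coe.mpr le_top)
  have hinf : (∞ : WithTop ℕ∞) + 1 ≤ ∞ := le_of_eq rfl
  have hgpx : ContDiffOn ℝ ∞ (pdx g) U := contDiffOn_pdx' hU hgI hinf
  have hgpy : ContDiffOn ℝ ∞ (pdy g) U := contDiffOn_pdy' hU hgI hinf
  have hgpyy : ContDiffOn ℝ ∞ (pdy (pdy g)) U := contDiffOn_pdy' hU hgpy hinf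
  have hgpyx : ContDiffOn ℝ ∞ (pdx (pdy g)) U := contDiffOn_pdx' hU hgpy hinf
  -- Step A : Δ(∂_y w) = ∂_y (Δ w) on U
  have StepA : ∀ q ∈ U, pdx (pdx h) q + pdy (pdy h) q = pdy g q :=
    fun q hq => lap_pdy_comm hU hw3 hq
  -- first x-derivative of v on U
  have B1 : ∀ q ∈ U, pdx v q = -pdx w q + 2 * q.2 * pdx h q - q.2 ^ 2 * pdx g q := by
    intro q hq
    have Hw := hasDerivAt_pdx (diffAt hU hw4 (by norm_num) hq)
    have Hh := hasDerivAt_pdx (diffAt hU hh3 (by norm_num) hq)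
    have Hg := hasDerivAt_pdx (diffAt hU hg2 (by norm_num) hq)
    exact ((Hw.neg.add (Hh.const_mul (2 * q.2))).sub (Hg.const_mul (q.2 ^ 2))).deriv
  have B2 : ∀ q ∈ U, pdx (pdx v) q
      = -pdx (pdx w) q + 2 * q.2 * pdx (pdx h) q - q.2 ^ 2 * pdx (pdx g) q := by
    intro q hq
    rw [pdx_congr_on hU B1 hq]
    have Hw := hasDerivAt_pdx (diffAt hU hpxw3 (by norm_num) hq)
    have Hh := hasDerivAt_pdx (diffAt hU hpxh2 (by norm_num) hq)
    have Hg := hasDerivAt_pdx (diffAt hU hgpx (WithTop.coe_le_coe.mpr le_top) hq)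
    exact ((Hw.neg.add (Hh.const_mul (2 * q.2))).sub (Hg.const_mul (q.2 ^ 2))).deriv
  -- first y-derivative of v on U
  have B3 : ∀ q ∈ U, pdy v q
      = h q + 2 * q.2 * pdy h q - (2 * q.2 * g q + q.2 ^ 2 * pdy g q) := by
    intro q hq
    have Hw := hasDerivAt_pdy (diffAt hU hw4 (by norm_num) hq)
    have Hh := hasDerivAt_pdy (diffAt hU hh3 (by norm_num) hq)
    have Hg := hasDerivAt_pdy (diffAt hU hg2 (by norm_num) hq)
    have Ht : HasDerivAt (fun t : ℝ => 2 * t) 2 q.2 := by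
      simpa using (hasDerivAt_id q.2).const_mul (2 : ℝ)
    have Ht2 : HasDerivAt (fun t : ℝ => t ^ 2) (2 * q.2) q.2 := by
      simpa using hasDerivAt_pow 2 q.2
    have H := ((Hw.neg.add (Ht.mul Hh)).sub (Ht2.mul Hg)).deriv
    refine H.trans ?_
    rw [hh_def]; ring
  have B4 : ∀ q ∈ U, pdy (pdy v) q
      = pdy h q + (2 * pdy h q + 2 * q.2 * pdy (pdy h) q)
        - (2 * g q + 2 * q.2 * pdy g q + (2 * q.2 * pdy g q + q.2 ^ 2 * pdy (pdy g) q)) := by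
    intro q hq
    rw [pdy_congr_on hU B3 hq]
    have Hh := hasDerivAt_pdy (diffAt hU hh3 (by norm_num) hq)
    have Hph := hasDerivAt_pdy (diffAt hU hpyh2 (by norm_num) hq)
    have Hg := hasDerivAt_pdy (diffAt hU hg2 (by norm_num) hq)
    have Hpg := hasDerivAt_pdy (diffAt hU hgpy (WithTop.coe_le_coe.mpr le_top) hq)
    have Ht : HasDerivAt (fun t : ℝ => 2 * t) 2 q.2 := by
      simpa using (hasDerivAt_id q.2).const_mul (2 : ℝ)
    have Ht2 : HasDerivAt (fun t : ℝ => t ^ 2) (2 * q.2) q.2 := by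
      simpa using hasDerivAt_pow 2 q.2
    have H := ((Hh.add ((Ht.mul Hph))).sub ((Ht.mul Hg).add (Ht2.mul Hpg))).deriv
    refine H.trans ?_
    ring
  -- the Laplacian of v on U
  have B5 : ∀ q ∈ U, lap v q = (-3) * g q + 4 * pdy h q - 2 * q.2 * pdy g q := by
    intro q hq
    have I1 := StepA q hq
    have I2 : pdx (pdx g) q + pdy (pdy g) q = 0 := hb q hq
    have I3 : g q = pdx (pdx w) q + pdy h q := rfl
    have e0 : lap v q = pdx (pdx v) q + pdy (pdy v) q := rfl
    rw [e0, B2 q hq, B4 q hq]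
    linear_combination I3 + 2 * q.2 * I1 - q.2 ^ 2 * I2
  -- second round: the Laplacian of `lap v`
  have C1 : ∀ q ∈ U,
      pdx (lap v) q = (-3) * pdx g q + 4 * pdx (pdy h) q - 2 * q.2 * pdx (pdy g) q := by
    intro q hq
    rw [pdx_congr_on hU B5 hq]
    have Hg := hasDerivAt_pdx (diffAt hU hg2 (by norm_num) hq)
    have Hph := hasDerivAt_pdx (diffAt hU hpyh2 (by norm_num) hq)
    have Hpg := hasDerivAt_pdx (diffAt hU hgpy (WithTop.coe_le_coe.mpr le_top) hq)
    exact (((Hg.const_mul (-3)).add (Hph.const_mul 4)).sub (Hpg.const_mul (2 * q.2))).deriv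
  have C2 : pdx (pdx (lap v)) p
      = (-3) * pdx (pdx g) p + 4 * pdx (pdx (pdy h)) p - 2 * p.2 * pdx (pdx (pdy g)) p := by
    rw [pdx_congr_on hU C1 hp]
    have Hg := hasDerivAt_pdx (diffAt hU hgpx (WithTop.coe_le_coe.mpr le_top) hp)
    have Hph := hasDerivAt_pdx (diffAt hU hpxyh1 le_rfl hp)
    have Hpg := hasDerivAt_pdx (diffAt hU hgpyx (WithTop.coe_le_coe.mpr le_top) hp)
    exact (((Hg.const_mul (-3)).add (Hph.const_mul 4)).sub (Hpg.const_mul (2 * p.2))).deriv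
  have C3 : ∀ q ∈ U, pdy (lap v) q
      = (-3) * pdy g q + 4 * pdy (pdy h) q
        - (2 * pdy g q + 2 * q.2 * pdy (pdy g) q) := by
    intro q hq
    rw [pdy_congr_on hU B5 hq]
    have Hg := hasDerivAt_pdy (diffAt hU hg2 (by norm_num) hq)
    have Hph := hasDerivAt_pdy (diffAt hU hpyh2 (by norm_num) hq)
    have Hpg := hasDerivAt_pdy (diffAt hU hgpy (WithTop.coe_le_coe.mpr le_top) hq)
    have Ht : HasDerivAt (fun t : ℝ => 2 * t) 2 q.2 := by
      simpa using (hasDerivAt_id q.2).const_mul (2 : ℝ)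
    exact (((Hg.const_mul (-3)).add (Hph.const_mul 4)).sub (Ht.mul Hpg)).deriv
  have C4 : pdy (pdy (lap v)) p
      = (-3) * pdy (pdy g) p + 4 * pdy (pdy (pdy h)) p
        - (2 * pdy (pdy g) p + (2 * pdy (pdy g) p + 2 * p.2 * pdy (pdy (pdy g)) p)) := by
    rw [pdy_congr_on hU C3 hp]
    have Hg := hasDerivAt_pdy (diffAt hU hgpy (WithTop.coe_le_coe.mpr le_top) hp)
    have Hph := hasDerivAt_pdy (diffAt hU hpyyh1 le_rfl hp)
    have Hpg := hasDerivAt_pdy (diffAt hU hgpy (WithTop.coe_le_coe.mpr le_top) hp)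
    have Hpgg := hasDerivAt_pdy (diffAt hU hgpyy (WithTop.coe_le_coe.mpr le_top) hp)
    have Ht : HasDerivAt (fun t : ℝ => 2 * t) 2 p.2 := by
      simpa using (hasDerivAt_id p.2).const_mul (2 : ℝ)
    exact (((Hg.const_mul (-3)).add (Hph.const_mul 4)).sub
      ((Hpg.const_mul 2).add (Ht.mul Hpgg))).deriv
  -- commutation identities
  have J1 : pdx (pdx (pdy h)) p + pdy (pdy (pdy h)) p = pdy (pdy g) p := by
    have e := lap_pdy_comm hU hh3 hp
    rw [e]
    exact pdy_congr_on hU StepA hp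
  have J2 : pdx (pdx (pdy g)) p + pdy (pdy (pdy g)) p = 0 := by
    have e := lap_pdy_comm hU hg3 hp
    rw [e]
    have e2 : pdy (fun q => pdx (pdx g) q + pdy (pdy g) q) p = pdy (fun _ => (0:ℝ)) p :=
      pdy_congr_on hU (fun q hq => hb q hq) hp
    rw [e2]
    exact deriv_const _ _
  have I2 : pdx (pdx g) p + pdy (pdy g) p = 0 := hb p hp
  have e0 : lap (lap v) p = pdx (pdx (lap v)) p + pdy (pdy (lap v)) p := rfl
  rw [e0, C2, C4]
  linear_combination (-3) * I2 + 4 * J1 - 2 * p.2 * J2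

lemma pdx_refl (f : ℝ × ℝ → ℝ) (q : ℝ × ℝ) :
    pdx (fun r => f (r.1, -r.2)) q = pdx f (q.1, -q.2) := rfl

lemma pdy_refl (f : ℝ × ℝ → ℝ) (q : ℝ × ℝ) :
    pdy (fun r => f (r.1, -r.2)) q = -pdy f (q.1, -q.2) := by
  show deriv (fun t => f (q.1, -t)) q.2 = -deriv (fun t => f (q.1, t)) (-q.2)
  exact deriv_comp_neg (f := fun s : ℝ => f (q.1, s)) (x := q.2)

lemma lap_refl (f : ℝ × ℝ → ℝ) (q : ℝ × ℝ) :
    lap (fun r => f (r.1, -r.2)) q = lap f (q.1, -q.2) := by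
  show pdx (pdx (fun r => f (r.1, -r.2))) q + pdy (pdy (fun r => f (r.1, -r.2))) q
    = pdx (pdx f) (q.1, -q.2) + pdy (pdy f) (q.1, -q.2)
  congr 1
  have h1 : (pdy (fun r => f (r.1, -r.2))) = (fun r => -pdy f (r.1, -r.2)) :=
    funext (pdy_refl f)
  rw [h1]
  have h2 : pdy (fun r => -pdy f (r.1, -r.2)) q = -pdy (fun r => pdy f (r.1, -r.2)) q := by
    show deriv (fun t => -pdy f (q.1, -t)) q.2 = -deriv (fun t => pdy f (q.1, -t)) q.2
    exact deriv.neg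
  rw [h2, pdy_refl (pdy f) q, neg_neg]

end PoritskyAux

open PoritskyAux in
/-- Poritsky's reflection formula for biharmonic functions with clamped
(Dirichlet) boundary conditions `u = ∂ₙ u = 0` on the x-axis: the reflected
function is biharmonic on the symmetric set `U` and agrees with `u` together
with its first normal derivative on the x-axis. -/
theorem poritsky_reflection_biharmonic
    (U : Set (ℝ × ℝ)) (hU : IsOpen U)
    (hsym : ∀ x y : ℝ, (x, y) ∈ U ↔ (x, -y) ∈ U)
    (u : ℝ × ℝ → ℝ)
    (hC4 : ContDiffOn ℝ 4 u U)
    (hbih : ∀ p ∈ U, lap (lap u) p = 0)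
    (h0 : ∀ x : ℝ, (x, (0 : ℝ)) ∈ U → u (x, 0) = 0)
    (h1 : ∀ x : ℝ, (x, (0 : ℝ)) ∈ U → pdy u (x, 0) = 0) :
    (∀ p ∈ U, lap (lap (poritskyV u)) p = 0) ∧
    (∀ x : ℝ, (x, (0 : ℝ)) ∈ U →
      poritskyV u (x, 0) = u (x, 0) ∧ pdy (poritskyV u) (x, 0) = pdy u (x, 0)) := by
  constructor
  · -- biharmonicity
    intro p hp
    set w : ℝ × ℝ → ℝ := fun q => u (q.1, -q.2) with hw_def
    have hveq : poritskyV u = (fun q => -w q + 2 * q.2 * pdy w q - q.2 ^ 2 * lap w q) := by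
      funext q
      show -u (q.1, -q.2) - 2 * q.2 * pdy u (q.1, -q.2) - q.2 ^ 2 * lap u (q.1, -q.2) = _
      rw [hw_def, pdy_refl u q, lap_refl u q]
      ring
    have hw4 : ContDiffOn ℝ 4 w U := by
      rw [hw_def]
      have hσ : ContDiff ℝ 4 (fun q : ℝ × ℝ => ((q.1, -q.2) : ℝ × ℝ)) :=
        contDiff_fst.prodMk contDiff_snd.neg
      exact hC4.comp hσ.contDiffOn (fun q hq => (hsym q.1 q.2).mp hq)
    have hbw : ∀ q ∈ U, lap (lap w) q = 0 := by
      intro q hq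
      have hlw : lap w = fun r => lap u (r.1, -r.2) := by
        rw [hw_def]; exact funext (lap_refl u)
      rw [hlw, lap_refl (lap u) q]
      exact hbih _ ((hsym q.1 q.2).mp hq)
    rw [hveq]
    exact biharmonic_main hU hw4 hbw p hp
  · -- boundary conditions
    intro x hx
    have hx0 : ((x, -(0:ℝ)) : ℝ × ℝ) = (x, 0) := by norm_num
    constructor
    · show -u (x, -(0:ℝ)) - 2 * (0:ℝ) * pdy u (x, -(0:ℝ)) - (0:ℝ) ^ 2 * lap u (x, -(0:ℝ))
        = u (x, 0)
      rw [hx0, h0 x hx]; ring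
    · -- first derivative matches
      have hdu : DifferentiableAt ℝ u (x, 0) := diffAt hU hC4 (by norm_num) hx
      have hpy3 : ContDiffOn ℝ 3 (pdy u) U := contDiffOn_pdy' hU hC4 (by norm_num)
      have hdpu : DifferentiableAt ℝ (pdy u) (x, 0) := diffAt hU hpy3 (by norm_num) hx
      have hlap2 : ContDiffOn ℝ 2 (lap u) U := by
        have hA : ContDiffOn ℝ 2 (pdx (pdx u)) U :=
          contDiffOn_pdx' hU (contDiffOn_pdx' hU hC4 (by norm_num) :
            ContDiffOn ℝ 3 (pdx u) U) (by norm_num)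
        have hB : ContDiffOn ℝ 2 (pdy (pdy u)) U :=
          contDiffOn_pdy' hU hpy3 (by norm_num)
        exact hA.add hB
      have hdlu : DifferentiableAt ℝ (lap u) (x, 0) := diffAt hU hlap2 (by norm_num) hx
      have Hn : HasDerivAt (fun t : ℝ => -t) (-1 : ℝ) 0 := by
        exact hasDerivAt_neg' (x := (0:ℝ))
      -- slices composed with negation
      have H1 : HasDerivAt (fun t : ℝ => u (x, -t)) (pdy u (x, 0) * (-1)) 0 := by
        have Hy : HasDerivAt (fun s => u (x, s)) (pdy u (x, 0)) (-(0:ℝ)) := by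
          rw [neg_zero]; exact hasDerivAt_pdy hdu
        exact Hy.comp 0 Hn
      have H2 : HasDerivAt (fun t : ℝ => pdy u (x, -t)) (pdy (pdy u) (x, 0) * (-1)) 0 := by
        have Hy : HasDerivAt (fun s => pdy u (x, s)) (pdy (pdy u) (x, 0)) (-(0:ℝ)) := by
          rw [neg_zero]; exact hasDerivAt_pdy hdpu
        exact Hy.comp 0 Hn
      have H3 : HasDerivAt (fun t : ℝ => lap u (x, -t)) (pdy (lap u) (x, 0) * (-1)) 0 := by
        have Hy : HasDerivAt (fun s => lap u (x, s)) (pdy (lap u) (x, 0)) (-(0:ℝ)) := by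
          rw [neg_zero]; exact hasDerivAt_pdy hdlu
        exact Hy.comp 0 Hn
      have Ht : HasDerivAt (fun t : ℝ => 2 * t) 2 (0:ℝ) := by
        simpa using (hasDerivAt_id (0:ℝ)).const_mul (2 : ℝ)
      have Ht2 : HasDerivAt (fun t : ℝ => t ^ 2) (2 * (0:ℝ)) (0:ℝ) := by
        simpa using hasDerivAt_pow 2 (0:ℝ)
      have H := ((H1.neg.sub (Ht.mul H2)).sub (Ht2.mul H3)).deriv
      refine H.trans ?_
      rw [hx0, h1 x hx]
      ring
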